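/- (Stability of the KBM under the perturbations of Theorem 2.1.) Let d ≥ 1, A > 0, θ ∈ (0,1), τ > 0, γ > 0, and let y_opt satisfy ‖y_opt‖_{W^{1,∞}(ℝ₊ × 𝕋^d)} < ∞. Let (N,Z) ∈ C^θ([0,τ) × 𝕋^d) satisfy the perturbed system ∂_t N − Δ_x N = [1 − (1/2)(Z − y_opt)² − N + φ_N] N, ∂_t Z − Δ_x Z = 2(∇_x N · ∇_x Z)/N − A(Z − y_opt) + φ_Z, with ‖φ_N(t,·)‖_{L^∞(𝕋^d)} + ‖φ_Z(t,·)‖_{L^∞(𝕋^d)} ≤ C₀/γ^θ + C₀·1_{[0,1/γ^θ]}(t) for some C₀ > 0, and let (N̄,Z̄) ∈ C^θ([0,τ) × 𝕋^d) solve the KBM, with (N(0,·),Z(0,·)) = (N̄(0,·),Z̄(0,·)) = (N⁰,Z⁰) where N⁰, Z⁰ ∈ W^{2,∞}(𝕋^d) and min_{𝕋^d} N⁰ > 0; assume N, N̄, Z, Z̄ are bounded and N, N̄ are bounded away from 0 on [0,τ) × 𝕋^d. Then there exists a constant C > 0 (independent of γ) such that for all t ∈ [0,τ), ‖(N − N̄)(t,·)‖_{L^∞(𝕋^d)}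 + ‖(NZ − N̄Z̄)(t,·)‖_{L^∞(𝕋^d)} ≤ (C/γ^θ) e^{Ct}. In particular, N → N̄ and Z → Z̄ in L^∞_loc(ℝ₊, L^∞(𝕋^d)) as γ → ∞. -/

import Mathlib

open MeasureTheory Real Set
open scoped ENNReal

noncomputable section

/-- Euclidean space `ℝ^d`. Periodic functions on it represent functions on the torus `𝕋^d`. -/
abbrev Eucl (d : ℕ) := EuclideanSpace ℝ (Fin d)

/-- Gaussian density `Γ_v(y) = (2πv)^{-1/2} exp(-y²/(2v))`. -/
def gaussianD (v y : ℝ) : ℝ := (2 * π * v) ^ (-(1:ℝ)/2) * Real.exp (-(y ^ 2) / (2 * v))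

/-- `ℤ^d`-periodicity: `f` represents a function on the torus `𝕋^d`. -/
def PeriodicFn {d : ℕ} (f : Eucl d → ℝ) : Prop :=
  ∀ (x : Eucl d) (k : Fin d → ℤ),
    f (x + ∑ i, (k i : ℝ) • EuclideanSpace.single i (1 : ℝ)) = f x

/-- Laplacian `Δ_x f` in the space variable. -/
def lapl {d : ℕ} (f : Eucl d → ℝ) (x : Eucl d) : ℝ :=
  ∑ i, fderiv ℝ (fun z => fderiv ℝ f z (EuclideanSpace.single i (1:ℝ))) x
      (EuclideanSpace.single i (1:ℝ))

/-- Dot product of gradients, `∇_x f · ∇_x g`. -/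
def gradDot {d : ℕ} (f g : Eucl d → ℝ) (x : Eucl d) : ℝ :=
  ∑ i, fderiv ℝ f x (EuclideanSpace.single i (1:ℝ)) *
    fderiv ℝ g x (EuclideanSpace.single i (1:ℝ))

/-- Population size `N(t,x) = ∫ n(t,x,y) dy`. -/
def Npop {d : ℕ} (n : ℝ → Eucl d → ℝ → ℝ) (t : ℝ) (x : Eucl d) : ℝ := ∫ y, n t x y

/-- Mean phenotypic trait `Z(t,x) = ∫ y n(t,x,y) dy / N(t,x)`. -/
def Zmean {d : ℕ} (n : ℝ → Eucl d → ℝ → ℝ) (t : ℝ) (x : Eucl d) : ℝ :=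
  (∫ y, y * n t x y) / Npop n t x

/-- Reproduction (infinitesimal) operator applied to `f = n(t,x,·)` (not yet normalized):
`∫∫ Γ_{A/2}(y - (y₊+y₊')/2) f(y₊) f(y₊') dy₊ dy₊'`. -/
def reproT (A : ℝ) (f : ℝ → ℝ) (y : ℝ) : ℝ :=
  ∫ p : ℝ × ℝ, gaussianD (A/2) (y - (p.1 + p.2)/2) * f p.1 * f p.2

/-- Right-hand side of the SIM equation. -/
def simRHS {d : ℕ} (A γ : ℝ) (yopt : ℝ → Eucl d → ℝ) (n : ℝ → Eucl d → ℝ → ℝ)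
    (t : ℝ) (x : Eucl d) (y : ℝ) : ℝ :=
  lapl (fun z => n t z y) x
    + (1 + A/2 - (1/2) * (y - yopt t x)^2 - Npop n t x) * n t x y
    + γ * (reproT A (n t x) y / Npop n t x - n t x y)

/-- Membership of a time `t` in `[0, τ)`, where `τ ∈ (0, ∞]`. -/
def InDom (τ : ℝ≥0∞) (t : ℝ) : Prop := 0 ≤ t ∧ ENNReal.ofReal t < τ

/-- A (classical, pointwise) solution of the SIM on `[0,τ) × 𝕋^d × ℝ` with initial datum `n0`,
lying in `L^∞([0,τ) × 𝕋^d, L¹((1+|y|⁴)dy))`. -/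
structure IsSIMSol {d : ℕ} (A γ : ℝ) (yopt : ℝ → Eucl d → ℝ) (n0 : Eucl d → ℝ → ℝ)
    (τ : ℝ≥0∞) (n : ℝ → Eucl d → ℝ → ℝ) : Prop where
  init : ∀ x y, n 0 x y = n0 x y
  nonneg : ∀ t x y, InDom τ t → 0 ≤ n t x y
  periodic : ∀ t y, InDom τ t → PeriodicFn fun x => n t x y
  integ : ∀ t x, InDom τ t → Integrable fun y => (1 + y^4) * n t x y
  bddL1 : ∃ M : ℝ, ∀ t x, InDom τ t → (∫ y, (1 + y^4) * n t x y) ≤ M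
  posMass : ∀ t x, InDom τ t → 0 < Npop n t x
  pde : ∀ t x y, InDom τ t → HasDerivAt (fun s => n s x y) (simRHS A γ yopt n t x y) t

/-- `f ∈ W^{2,∞}`: `f`, its derivative and second derivative are (globally) bounded. -/
def BddW2inf {d : ℕ} (f : Eucl d → ℝ) : Prop :=
  ∃ M : ℝ, ∀ x, |f x| + ‖fderiv ℝ f x‖ + ‖fderiv ℝ (fderiv ℝ f) x‖ ≤ M

/-- Assumption 1 of the paper, on the optimal trait `y_opt` and the initial datum `n⁰`. -/
structure Assumption1 {d : ℕ} (yopt : ℝ → Eucl d → ℝ) (n0 : Eucl d → ℝ → ℝ) : Prop where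
  yopt_cd : ContDiff ℝ 1 (fun p : ℝ × Eucl d => yopt p.1 p.2)
  yopt_per : ∀ t, PeriodicFn (yopt t)
  yopt_bdd : ∃ M : ℝ, ∀ (t : ℝ) (x : Eucl d), 0 ≤ t →
    |yopt t x| + ‖fderiv ℝ (fun p : ℝ × Eucl d => yopt p.1 p.2) (t, x)‖ ≤ M
  n0_nonneg : ∀ x y, 0 ≤ n0 x y
  n0_per : ∀ y, PeriodicFn fun x => n0 x y
  n0_integ : ∀ x, Integrable fun y => (1 + y^4) * n0 x y
  n0_moment : ∃ M : ℝ, ∀ x, (∫ y, (1 + y^4) * n0 x y) / (∫ y, n0 x y) ≤ M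
  n0_mass_pos : ∃ ε > (0:ℝ), ∀ x, ε ≤ ∫ y, n0 x y
  n0_N_W2 : BddW2inf fun x => ∫ y, n0 x y
  n0_Z_W2 : BddW2inf fun x => (∫ y, y * n0 x y) / (∫ y, n0 x y)

/-- Couplings (transference plans) between two measures on `ℝ`. -/
def Couplings (μ ν : Measure ℝ) : Set (Measure (ℝ × ℝ)) :=
  {plan | IsProbabilityMeasure plan ∧ plan.map Prod.fst = μ ∧ plan.map Prod.snd = ν}

/-- Wasserstein distance `W_p` (valued in `ℝ≥0∞`). -/
def Wass (p : ℝ) (μ ν : Measure ℝ) : ℝ≥0∞ :=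
  ⨅ plan ∈ Couplings μ ν, (∫⁻ q : ℝ × ℝ, ENNReal.ofReal (|q.1 - q.2| ^ p) ∂plan) ^ (1/p)

/-- The measure on `ℝ` with density `f` with respect to Lebesgue measure. -/
def densToMeasure (f : ℝ → ℝ) : Measure ℝ :=
  volume.withDensity fun y => ENNReal.ofReal (f y)

/-- `‖Z(0,·)‖_{L^∞(𝕋^d)}` computed from the initial datum. -/
def supZ0 {d : ℕ} (n0 : Eucl d → ℝ → ℝ) : ℝ :=
  ⨆ x : Eucl d, |(∫ y, y * n0 x y) / (∫ y, n0 x y)|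

/-- `‖y_opt‖_{L^∞(ℝ₊ × 𝕋^d)}`. -/
def supYopt {d : ℕ} (yopt : ℝ → Eucl d → ℝ) : ℝ :=
  ⨆ t : Ici (0:ℝ), ⨆ x : Eucl d, |yopt t x|

end

noncomputable section

/-- `θ`-Hölder continuity (jointly in time and space) on `[0,τ) × 𝕋^d`. -/
def HolderOn {d : ℕ} (θ τ : ℝ) (f : ℝ → Eucl d → ℝ) : Prop :=
  ∃ C : ℝ, ∀ (s t : ℝ) (x y : Eucl d), 0 ≤ s → s < τ → 0 ≤ t → t < τ →
    |f t x - f s y| ≤ C * (|t - s| + ‖x - y‖) ^ θ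

/-- The Kirkpatrick-Barton system, with perturbations `φN`, `φZ`, pointwise on `[0,τ) × 𝕋^d`
(the unperturbed KBM corresponds to `φN = φZ = 0`). -/
def KBMsystem {d : ℕ} (A : ℝ) (yopt φN φZ N Z : ℝ → Eucl d → ℝ) (τ : ℝ) : Prop :=
  ∀ (t : ℝ) (x : Eucl d), 0 ≤ t → t < τ →
    HasDerivAt (fun s => N s x)
      (lapl (N t) x + (1 - (1/2) * (Z t x - yopt t x) ^ 2 - N t x + φN t x) * N t x) t ∧
    HasDerivAt (fun s => Z s x)
      (lapl (Z t) x + 2 * gradDot (N t) (Z t) x / N t x - A * (Z t x - yopt t x) + φZ t x) t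

end

set_option maxHeartbeats 2000000

section KBMAux

open Real Set Filter Topology

noncomputable section

lemma kbm_diff_fderiv_apply {d : ℕ} {F : Eucl d → ℝ} (hF : ContDiff ℝ 2 F) (e : Eucl d) :
    Differentiable ℝ (fun z => fderiv ℝ F z e) := by
  have h1 : ContDiff ℝ 1 (fderiv ℝ F) := hF.fderiv_right (by norm_num)
  exact ((ContinuousLinearMap.apply ℝ ℝ e).contDiff.comp h1).differentiable one_ne_zero

lemma kbm_lapl_comb {d : ℕ} {F G : Eucl d → ℝ} (hF : ContDiff ℝ 2 F) (hG : ContDiff ℝ 2 G)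
    (a b : ℝ) (x : Eucl d) :
    lapl (fun z => a * F z + b * G z) x = a * lapl F x + b * lapl G x := by
  have hdF : Differentiable ℝ F := hF.differentiable (by norm_num)
  have hdG : Differentiable ℝ G := hG.differentiable (by norm_num)
  unfold lapl
  rw [Finset.mul_sum, Finset.mul_sum, ← Finset.sum_add_distrib]
  refine Finset.sum_congr rfl fun i _ => ?_
  set e := EuclideanSpace.single i (1:ℝ)
  have key : (fun z => fderiv ℝ (fun z => a * F z + b * G z) z e)
      = fun z => a * fderiv ℝ F z e + b * fderiv ℝ G z e := by
    funext z
    rw [fderiv_fun_add ((hdF z).const_mul a) ((hdG z).const_mul b),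
      fderiv_const_mul (hdF z) a, fderiv_const_mul (hdG z) b]
    simp
  rw [key, fderiv_fun_add (((kbm_diff_fderiv_apply hF e) x).const_mul a)
      (((kbm_diff_fderiv_apply hG e) x).const_mul b),
    fderiv_const_mul ((kbm_diff_fderiv_apply hF e) x) a,
    fderiv_const_mul ((kbm_diff_fderiv_apply hG e) x) b]
  simp

lemma kbm_lapl_sub {d : ℕ} {F G : Eucl d → ℝ} (hF : ContDiff ℝ 2 F) (hG : ContDiff ℝ 2 G)
    (x : Eucl d) :
    lapl (fun z => F z - G z) x = lapl F x - lapl G x := by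
  have h : (fun z => F z - G z) = (fun z => (1:ℝ) * F z + (-1:ℝ) * G z) := by
    funext z; ring
  rw [h, kbm_lapl_comb hF hG 1 (-1) x]; ring

lemma kbm_lapl_mul {d : ℕ} {F G : Eucl d → ℝ} (hF : ContDiff ℝ 2 F) (hG : ContDiff ℝ 2 G)
    (x : Eucl d) :
    lapl (fun z => F z * G z) x
      = F x * lapl G x + G x * lapl F x + 2 * gradDot F G x := by
  have hdF : Differentiable ℝ F := hF.differentiable (by norm_num)
  have hdG : Differentiable ℝ G := hG.differentiable (by norm_num)
  unfold lapl gradDot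
  rw [Finset.mul_sum, Finset.mul_sum, Finset.mul_sum, ← Finset.sum_add_distrib,
    ← Finset.sum_add_distrib]
  refine Finset.sum_congr rfl fun i _ => ?_
  set e := EuclideanSpace.single i (1:ℝ)
  have key : (fun z => fderiv ℝ (fun z => F z * G z) z e)
      = fun z => F z * fderiv ℝ G z e + G z * fderiv ℝ F z e := by
    funext z
    rw [fderiv_fun_mul (hdF z) (hdG z)]
    simp
  rw [key, fderiv_fun_add ((hdF x).fun_mul ((kbm_diff_fderiv_apply hG e) x))
      ((hdG x).fun_mul ((kbm_diff_fderiv_apply hF e) x)),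
    fderiv_fun_mul (hdF x) ((kbm_diff_fderiv_apply hG e) x),
    fderiv_fun_mul (hdG x) ((kbm_diff_fderiv_apply hF e) x)]
  simp
  ring

lemma kbm_second_deriv_nonpos {g g1 : ℝ → ℝ} {g2 : ℝ}
    (hd : ∀ s, HasDerivAt g (g1 s) s) (hd2 : HasDerivAt g1 g2 0)
    (hmax : ∀ s, g s ≤ g 0) : g2 ≤ 0 := by
  by_contra hpos
  push_neg at hpos
  have hg10 : g1 0 = 0 := by
    have : IsLocalMax g 0 := Filter.Eventually.of_forall hmax
    exact this.hasDerivAt_eq_zero (hd 0)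
  have hslope := hasDerivAt_iff_tendsto_slope.1 hd2
  have hev : ∀ᶠ t in nhdsWithin (0:ℝ) (Ioi 0), 0 < slope g1 0 t := by
    have h1 : Ioi (0:ℝ) ⊆ {(0:ℝ)}ᶜ := fun t ht => ne_of_gt ht
    have := (hslope.mono_left (nhdsWithin_mono 0 h1)).eventually (eventually_gt_nhds hpos)
    simpa using this
  rw [eventually_iff, mem_nhdsGT_iff_exists_Ioo_subset] at hev
  obtain ⟨u, hu, hsub⟩ := hev
  have hu' : (0:ℝ) < u := hu
  have hu2 : (0:ℝ) < u/2 := half_pos hu'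
  have hcont : ContinuousOn g (Icc 0 (u/2)) := fun t _ => (hd t).continuousAt.continuousWithinAt
  obtain ⟨c, hc, hceq⟩ := exists_hasDerivAt_eq_slope g g1 hu2 hcont (fun t _ => hd t)
  have hc' : c ∈ Ioo (0:ℝ) u := ⟨hc.1, lt_trans hc.2 (by linarith)⟩
  have h1 : 0 < slope g1 0 c := hsub hc'
  have hcpos : 0 < c := hc.1
  have h2 : 0 < g1 c := by
    rw [slope_def_field, hg10, sub_zero, sub_zero] at h1
    have := mul_pos h1 hcpos
    rwa [div_mul_cancel₀ _ (ne_of_gt hcpos)] at this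
  have h3 : g1 c ≤ 0 := by
    rw [hceq]
    apply div_nonpos_of_nonpos_of_nonneg
    · linarith [hmax (u/2)]
    · linarith
  linarith

lemma kbm_left_deriv_nonneg {f : ℝ → ℝ} {t₀ f' : ℝ} (hderiv : HasDerivAt f f' t₀)
    (hle : ∀ t ∈ Ico (0:ℝ) t₀, f t ≤ f t₀) (ht₀ : 0 < t₀) : 0 ≤ f' := by
  by_contra hneg
  push_neg at hneg
  have hslope := hasDerivAt_iff_tendsto_slope.1 hderiv
  have hev : ∀ᶠ t in nhdsWithin t₀ (Iio t₀), slope f t₀ t < 0 := by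
    have h1 : Iio t₀ ⊆ {t₀}ᶜ := fun t ht => ne_of_lt ht
    exact (hslope.mono_left (nhdsWithin_mono t₀ h1)).eventually (eventually_lt_nhds hneg)
  have hev2 : ∀ᶠ t in nhdsWithin t₀ (Iio t₀), 0 < t :=
    eventually_nhdsWithin_of_eventually_nhds (eventually_gt_nhds ht₀)
  have hev3 : ∀ᶠ t in nhdsWithin t₀ (Iio t₀), t < t₀ :=
    eventually_mem_nhdsWithin
  obtain ⟨t, h1, h2, h3⟩ := (hev.and (hev2.and hev3)).exists
  rw [slope_def_field] at h1
  have hnum : 0 < f t - f t₀ := by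
    have hden : t - t₀ < 0 := by linarith
    have := mul_pos_of_neg_of_neg h1 hden
    rwa [div_mul_cancel₀ _ (ne_of_lt hden)] at this
  have := hle t ⟨le_of_lt h2, h3⟩
  linarith

lemma kbm_lapl_nonpos_of_max {d : ℕ} {f : Eucl d → ℝ} (hf : ContDiff ℝ 2 f) {x₀ : Eucl d}
    (hmax : ∀ x, f x ≤ f x₀) : lapl f x₀ ≤ 0 := by
  unfold lapl
  apply Finset.sum_nonpos
  intro i _
  set e := EuclideanSpace.single i (1:ℝ) with he
  set line : ℝ → Eucl d := fun s => x₀ + s • e with hline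
  have hlined : ∀ s, HasDerivAt line e s := by
    intro s
    simpa [hline] using ((hasDerivAt_id s).smul_const e).const_add x₀
  have hF : Differentiable ℝ (fun z => fderiv ℝ f z e) := kbm_diff_fderiv_apply hf e
  have hline0 : line 0 = x₀ := by simp [hline]
  have hd : ∀ s, HasDerivAt (fun s => f (line s)) (fderiv ℝ f (line s) e) s := by
    intro s
    exact ((hf.differentiable (by norm_num) (line s)).hasFDerivAt).comp_hasDerivAt s (hlined s)
  have hd2 : HasDerivAt (fun s => fderiv ℝ f (line s) e)
      (fderiv ℝ (fun z => fderiv ℝ f z e) x₀ e) 0 := by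
    have := ((hF (line 0)).hasFDerivAt).comp_hasDerivAt 0 (hlined 0)
    rwa [hline0] at this
  have hmax' : ∀ s, f (line s) ≤ f (line 0) := by
    intro s; rw [hline0]; exact hmax _
  exact kbm_second_deriv_nonpos hd hd2 hmax'

lemma kbm_periodic_reduce {d : ℕ} (hd : 1 ≤ d) (x : Eucl d) :
    ∃ (x₀ : Eucl d) (k : Fin d → ℤ), ‖x₀‖ ≤ (d:ℝ) ∧
      x = x₀ + ∑ i, ((k i : ℝ)) • EuclideanSpace.single i (1:ℝ) := by
  classical
  set k : Fin d → ℤ := fun i => ⌊x i⌋ with hk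
  set v : Eucl d := ∑ i, ((k i : ℝ)) • EuclideanSpace.single i (1:ℝ) with hv
  have hvj : ∀ j, v j = (k j : ℝ) := by
    intro j
    rw [hv]
    rw [show (∑ i, ((k i : ℝ)) • EuclideanSpace.single i (1:ℝ)) j
      = ∑ i, (((k i : ℝ)) • EuclideanSpace.single i (1:ℝ)) j from by
        rw [WithLp.ofLp_sum]; exact Finset.sum_apply j Finset.univ _]
    simp [EuclideanSpace.single_apply]
  refine ⟨x - v, k, ?_, by abel⟩
  have hcoord : ∀ j, |(x - v) j| ≤ 1 := by
    intro j
    have : (x - v) j = x j - (k j : ℝ) := by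
      simp [hvj j]
    rw [this, hk]
    have h1 := Int.floor_le (x j)
    have h2 := Int.lt_floor_add_one (x j)
    rw [abs_le]; constructor <;> [linarith; linarith]
  rw [EuclideanSpace.norm_eq]
  have hsum : (∑ i, ‖(x - v) i‖ ^ 2) ≤ (d:ℝ) := by
    calc (∑ i, ‖(x - v) i‖ ^ 2) ≤ ∑ _i : Fin d, (1:ℝ) := by
          apply Finset.sum_le_sum
          intro i _
          have := hcoord i
          have habs : ‖(x - v) i‖ = |(x - v) i| := rfl
          rw [habs]
          nlinarith [abs_nonneg ((x-v) i)]
      _ = (d:ℝ) := by simp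
  calc √(∑ i, ‖(x - v) i‖ ^ 2) ≤ √(d:ℝ) := Real.sqrt_le_sqrt hsum
    _ ≤ (d:ℝ) := by
        have h1 : (1:ℝ) ≤ (d:ℝ) := by exact_mod_cast hd
        nlinarith [Real.sq_sqrt (show (0:ℝ) ≤ (d:ℝ) by positivity),
          Real.sqrt_nonneg (d:ℝ)]

lemma kbm_tendsto_holder_mod {θ L t : ℝ} (hθ : 0 < θ) (F : Filter ℝ) (hF : F ≤ 𝓝 t) :
    Tendsto (fun s => L * |s - t| ^ θ) F (𝓝 0) := by
  have h1 : ContinuousAt (fun r : ℝ => r ^ θ) 0 :=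
    Real.continuousAt_rpow_const 0 θ (Or.inr hθ.le)
  have h2 : Tendsto (fun s : ℝ => |s - t|) (𝓝 t) (𝓝 0) := by
    have : Continuous fun s : ℝ => |s - t| := (continuous_id.sub continuous_const).abs
    have := this.tendsto t
    simpa using this
  have h3 : Tendsto (fun s : ℝ => |s - t| ^ θ) (𝓝 t) (𝓝 0) := by
    have := h1.tendsto.comp h2
    simpa [Function.comp_def, Real.zero_rpow (ne_of_gt hθ)] using this
  have h4 : Tendsto (fun s : ℝ => L * |s - t| ^ θ) (𝓝 t) (𝓝 0) := by
    simpa using (h3.const_mul L)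
  exact h4.mono_left hF

theorem kbm_max_principle {d : ℕ} (hd : 1 ≤ d) {τ θ L Kw : ℝ} (hθ : 0 < θ) (hτ : 0 < τ)
    (u v : ℝ → Eucl d → ℝ) (ρ g g' : ℝ → ℝ)
    (hsm : ∀ t, 0 ≤ t → t < τ → ContDiff ℝ 2 (u t) ∧ ContDiff ℝ 2 (v t))
    (hper : ∀ t, PeriodicFn (u t) ∧ PeriodicFn (v t))
    (hHol : ∀ s t x, 0 ≤ s → s < τ → 0 ≤ t → t < τ →
      |u t x - u s x| + |v t x - v s x| ≤ L * |t - s| ^ θ)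
    (hinit : ∀ x, u 0 x = 0 ∧ v 0 x = 0)
    (hpde : ∀ t x (a b : ℝ), 0 ≤ t → t < τ → |a| ≤ 1 → |b| ≤ 1 →
      ∃ R : ℝ, HasDerivAt (fun s => a * u s x + b * v s x)
          (lapl (fun z => a * u t z + b * v t z) x + R) t ∧
        |R| ≤ Kw * (|u t x| + |v t x|) + ρ t)
    (hg : ∀ t, 0 ≤ t → HasDerivAt g (g' t) t)
    (hg0 : 0 < g 0)
    (hgK : ∀ t, 0 ≤ t → t < τ → Kw * g t + ρ t < g' t) :
    ∀ t x, 0 ≤ t → t < τ → |u t x| + |v t x| < g t := by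
  intro t₁ x₁ ht₁0 ht₁τ
  by_contra hcon
  push_neg at hcon
  set w : ℝ → Eucl d → ℝ := fun t x => |u t x| + |v t x| with hw
  set Q : Set (Eucl d) := Metric.closedBall 0 d with hQ
  have hQc : IsCompact Q := isCompact_closedBall _ _
  have hQne : Q.Nonempty := ⟨0, by
    simp only [hQ, Metric.mem_closedBall, dist_self]
    positivity⟩
  have hwcont : ∀ t, 0 ≤ t → t < τ → Continuous (w t) := by
    intro t h1 h2
    have hu := ((hsm t h1 h2).1.continuous).abs
    have hv := ((hsm t h1 h2).2.continuous).abs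
    exact hu.add hv
  set m : ℝ → ℝ := fun t => sSup (w t '' Q) with hm
  have hm_attain : ∀ t, 0 ≤ t → t < τ →
      ∃ xt ∈ Q, w t xt = m t ∧ ∀ x, w t x ≤ w t xt := by
    intro t h1 h2
    obtain ⟨xt, hxtQ, hxtmax⟩ := hQc.exists_isMaxOn hQne ((hwcont t h1 h2).continuousOn)
    refine ⟨xt, hxtQ, ?_, ?_⟩
    · have hgr : IsGreatest (w t '' Q) (w t xt) := by
        constructor
        · exact mem_image_of_mem _ hxtQ
        · rintro y ⟨z, hzQ, rfl⟩
          exact hxtmax hzQ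
      exact hgr.csSup_eq.symm
    · intro x
      obtain ⟨x₀, k, hx₀n, hx₀eq⟩ := kbm_periodic_reduce hd x
      have hx₀Q : x₀ ∈ Q := by rwa [hQ, mem_closedBall_zero_iff]
      have hred : w t x = w t x₀ := by
        rw [hw]
        simp only
        rw [hx₀eq, (hper t).1 x₀ k, (hper t).2 x₀ k]
      rw [hred]
      exact hxtmax hx₀Q
  have hm_ub : ∀ t x, 0 ≤ t → t < τ → w t x ≤ m t := by
    intro t x h1 h2
    obtain ⟨xt, _, heq, hall⟩ := hm_attain t h1 h2
    rw [← heq]; exact hall x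
  have hm_hold : ∀ s t, 0 ≤ s → s < τ → 0 ≤ t → t < τ → m t - m s ≤ L * |t - s| ^ θ := by
    intro s t hs1 hs2 ht1 ht2
    obtain ⟨xt, _, heq, _⟩ := hm_attain t ht1 ht2
    have h1 : w t xt - w s xt ≤ L * |t - s| ^ θ := by
      have := hHol s t xt hs1 hs2 ht1 ht2
      rw [hw]; simp only
      have e1 : |u t xt| - |u s xt| ≤ |u t xt - u s xt| := abs_sub_abs_le_abs_sub _ _
      have e2 : |v t xt| - |v s xt| ≤ |v t xt - v s xt| := abs_sub_abs_le_abs_sub _ _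
      linarith
    have h2 : w s xt ≤ m s := hm_ub s xt hs1 hs2
    linarith [heq ▸ (by linarith : w t xt ≤ w s xt + L * |t - s| ^ θ)]
  have hm_cont : ∀ t, 0 ≤ t → t < τ → ContinuousWithinAt m (Ico 0 τ) t := by
    intro t hq1 hq2
    rw [ContinuousWithinAt, tendsto_iff_norm_sub_tendsto_zero]
    apply squeeze_zero' (g := fun s => L * |s - t| ^ θ)
    · exact Eventually.of_forall fun s => norm_nonneg _
    · filter_upwards [eventually_mem_nhdsWithin] with s hs
      have h1 := hm_hold s t hs.1 hs.2 hq1 hq2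
      have h2' := hm_hold t s hq1 hq2 hs.1 hs.2
      rw [abs_sub_comm t s] at h1
      rw [Real.norm_eq_abs, abs_le]
      constructor <;> linarith
    · exact kbm_tendsto_holder_mod hθ _ nhdsWithin_le_nhds
  set S : Set ℝ := {t | t ∈ Icc 0 t₁ ∧ g t ≤ m t} with hS
  have hSne : S.Nonempty :=
    ⟨t₁, ⟨⟨ht₁0, le_refl t₁⟩, le_trans hcon (hm_ub t₁ x₁ ht₁0 ht₁τ)⟩⟩
  have hgcont : ContinuousOn g (Icc 0 t₁) := fun t ht => (hg t ht.1).continuousAt.continuousWithinAt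
  have hmcontOn : ContinuousOn m (Icc 0 t₁) := by
    intro t ht
    have hsub : Icc 0 t₁ ⊆ Ico 0 τ := fun s hs => ⟨hs.1, lt_of_le_of_lt hs.2 ht₁τ⟩
    exact (hm_cont t ht.1 (lt_of_le_of_lt ht.2 ht₁τ)).mono hsub
  have hScl : IsClosed S := by
    have : S = Icc 0 t₁ ∩ (fun t => g t - m t) ⁻¹' (Iic 0) := by
      ext t; simp only [hS, mem_setOf_eq, mem_inter_iff, mem_preimage, mem_Iic]
      constructor
      · rintro ⟨h1, h2⟩; exact ⟨h1, by linarith⟩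
      · rintro ⟨h1, h2⟩; exact ⟨h1, by linarith⟩
    rw [this]
    exact (hgcont.sub hmcontOn).preimage_isClosed_of_isClosed isClosed_Icc isClosed_Iic
  have hSbdd : BddBelow S := ⟨0, fun t ht => ht.1.1⟩
  set t₀ : ℝ := sInf S with ht₀
  have ht₀S : t₀ ∈ S := hScl.csInf_mem hSne hSbdd
  have ht₀0 : 0 ≤ t₀ := ht₀S.1.1
  have ht₀τ : t₀ < τ := lt_of_le_of_lt ht₀S.1.2 ht₁τ
  have hm0 : m 0 = 0 := by
    obtain ⟨x0, _, heq, _⟩ := hm_attain 0 le_rfl hτ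
    rw [← heq, hw]
    simp [(hinit x0).1, (hinit x0).2]
  have ht₀pos : 0 < t₀ := by
    rcases lt_or_eq_of_le ht₀0 with h | h
    · exact h
    · exfalso
      have : g 0 ≤ m 0 := by rw [h]; exact ht₀S.2
      rw [hm0] at this; linarith
  have hlt : ∀ t, 0 ≤ t → t < t₀ → m t < g t := by
    intro t h1 h2
    by_contra hge
    push_neg at hge
    have htS : t ∈ S := ⟨⟨h1, le_trans h2.le ht₀S.1.2⟩, hge⟩
    exact absurd (csInf_le hSbdd htS) (not_le.mpr h2)
  have hm_eq : m t₀ = g t₀ := by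
    refine le_antisymm ?_ ht₀S.2
    have hne : NeBot (𝓝[Ioo 0 t₀] t₀) := by
      rw [← mem_closure_iff_nhdsWithin_neBot, closure_Ioo (ne_of_lt ht₀pos)]
      exact ⟨ht₀0, le_rfl⟩
    have hF : 𝓝[Ioo 0 t₀] t₀ ≤ 𝓝[Ico 0 τ] t₀ :=
      nhdsWithin_mono _ (fun s hs => ⟨hs.1.le, lt_trans hs.2 ht₀τ⟩)
    have hmt : Tendsto m (𝓝[Ioo 0 t₀] t₀) (𝓝 (m t₀)) :=
      (hm_cont t₀ ht₀0 ht₀τ).mono_left hF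
    have hgt : Tendsto g (𝓝[Ioo 0 t₀] t₀) (𝓝 (g t₀)) :=
      ((hg t₀ ht₀0).continuousAt.tendsto).mono_left nhdsWithin_le_nhds
    have hev : ∀ᶠ s in 𝓝[Ioo 0 t₀] t₀, m s ≤ g s := by
      filter_upwards [eventually_mem_nhdsWithin] with s hs
      exact (hlt s hs.1.le hs.2).le
    exact le_of_tendsto_of_tendsto hmt hgt hev
  obtain ⟨xs, hxsQ, hxseq, hxsmax⟩ := hm_attain t₀ ht₀0 ht₀τ
  set a : ℝ := if 0 ≤ u t₀ xs then 1 else -1 with ha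
  set b : ℝ := if 0 ≤ v t₀ xs then 1 else -1 with hb
  have ha1 : |a| ≤ 1 := by rw [ha]; split <;> simp
  have hb1 : |b| ≤ 1 := by rw [hb]; split <;> simp
  have hau : a * u t₀ xs = |u t₀ xs| := by
    rw [ha]; split <;> rename_i hc
    · rw [one_mul, abs_of_nonneg hc]
    · push_neg at hc; rw [abs_of_neg hc]; ring
  have hbv : b * v t₀ xs = |v t₀ xs| := by
    rw [hb]; split <;> rename_i hc
    · rw [one_mul, abs_of_nonneg hc]
    · push_neg at hc; rw [abs_of_neg hc]; ring
  have hhle : ∀ t x, a * u t x + b * v t x ≤ w t x := by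
    intro t x
    have e1 : a * u t x ≤ |u t x| := by
      calc a * u t x ≤ |a * u t x| := le_abs_self _
        _ = |a| * |u t x| := abs_mul _ _
        _ ≤ 1 * |u t x| := mul_le_mul_of_nonneg_right ha1 (abs_nonneg _)
        _ = |u t x| := one_mul _
    have e2 : b * v t x ≤ |v t x| := by
      calc b * v t x ≤ |b * v t x| := le_abs_self _
        _ = |b| * |v t x| := abs_mul _ _
        _ ≤ 1 * |v t x| := mul_le_mul_of_nonneg_right hb1 (abs_nonneg _)
        _ = |v t x| := one_mul _
    rw [hw]; simp only; linarith
  obtain ⟨R, hRd, hRb⟩ := hpde t₀ xs a b ht₀0 ht₀τ ha1 hb1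
  have hHsm : ContDiff ℝ 2 (fun z => a * u t₀ z + b * v t₀ z) := by
    have h1 := (hsm t₀ ht₀0 ht₀τ).1
    have h2 := (hsm t₀ ht₀0 ht₀τ).2
    exact (contDiff_const.mul h1).add (contDiff_const.mul h2)
  have hHmax : ∀ z, a * u t₀ z + b * v t₀ z ≤ a * u t₀ xs + b * v t₀ xs := by
    intro z
    calc a * u t₀ z + b * v t₀ z ≤ w t₀ z := hhle t₀ z
      _ ≤ w t₀ xs := hxsmax z
      _ = a * u t₀ xs + b * v t₀ xs := by rw [hw]; simp only; rw [hau, hbv]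
  have hlapl : lapl (fun z => a * u t₀ z + b * v t₀ z) xs ≤ 0 :=
    kbm_lapl_nonpos_of_max hHsm hHmax
  have hgd := hg t₀ ht₀0
  have hfd : HasDerivAt (fun s => (a * u s xs + b * v s xs) - g s)
      ((lapl (fun z => a * u t₀ z + b * v t₀ z) xs + R) - g' t₀) t₀ := hRd.sub hgd
  have hfle : ∀ t ∈ Ico (0:ℝ) t₀, (a * u t xs + b * v t xs) - g t
      ≤ (a * u t₀ xs + b * v t₀ xs) - g t₀ := by
    intro t ht
    have h1 : a * u t xs + b * v t xs ≤ w t xs := hhle t xs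
    have h2 : w t xs ≤ m t := hm_ub t xs ht.1 (lt_trans ht.2 ht₀τ)
    have h3 : m t < g t := hlt t ht.1 ht.2
    have h4 : a * u t₀ xs + b * v t₀ xs - g t₀ = 0 := by
      rw [hau, hbv]
      have : |u t₀ xs| + |v t₀ xs| = m t₀ := hxseq
      rw [this, hm_eq]; ring
    linarith
  have hnn := kbm_left_deriv_nonneg hfd hfle ht₀pos
  have hDlt : (lapl (fun z => a * u t₀ z + b * v t₀ z) xs + R) < g' t₀ := by
    have h1 : R ≤ |R| := le_abs_self _
    have h2 : |u t₀ xs| + |v t₀ xs| = g t₀ := by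
      have : |u t₀ xs| + |v t₀ xs| = m t₀ := hxseq
      rw [this, hm_eq]
    have h3 := hgK t₀ ht₀0 ht₀τ
    rw [h2] at hRb
    linarith
  linarith

-- constants for the estimate
def K1C (M ε : ℝ) : ℝ := (M + 1) / ε
def B1C (M Y : ℝ) : ℝ := 1 + (M + Y)^2 / 2 + M
def B2C (M ε Y : ℝ) : ℝ := (M + Y) * K1C M ε + 1
def KwC (A M ε Y : ℝ) : ℝ := 2 * B1C M Y + (M + M^2) * B2C M ε Y + A + A * Y
def K3C (M : ℝ) : ℝ := M + M^2

lemma K1C_nonneg {M ε : ℝ} (hε : 0 < ε) (hM : 0 ≤ M) : 0 ≤ K1C M ε := by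
  rw [K1C]; positivity

lemma B1C_nonneg {M Y : ℝ} (hM : 0 ≤ M) : 0 ≤ B1C M Y := by
  rw [B1C]; positivity

lemma B2C_nonneg {M ε Y : ℝ} (hε : 0 < ε) (hM : 0 ≤ M) (hY : 0 ≤ Y) : 0 ≤ B2C M ε Y := by
  rw [B2C]
  have h1 : 0 ≤ (M+Y) * K1C M ε := mul_nonneg (by linarith) (K1C_nonneg hε hM)
  linarith

lemma KwC_nonneg {A M ε Y : ℝ} (hA : 0 < A) (hε : 0 < ε) (hM : 0 ≤ M) (hY : 0 ≤ Y) :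
    0 ≤ KwC A M ε Y := by
  rw [KwC]
  have h1 := B1C_nonneg (Y := Y) hM
  have h2 : 0 ≤ (M + M^2) * B2C M ε Y := mul_nonneg (by positivity) (B2C_nonneg hε hM hY)
  have h3 : 0 ≤ A * Y := mul_nonneg hA.le hY
  linarith

lemma K3C_nonneg {M : ℝ} (hM : 0 ≤ M) : 0 ≤ K3C M := by rw [K3C]; positivity

lemma key_est (A M ε Y n z nb zb y pn pz a b : ℝ)
    (hA : 0 < A) (hε : 0 < ε) (hMε : ε ≤ M) (hY : 0 ≤ Y)
    (hn : |n| ≤ M) (hz : |z| ≤ M) (hnb : |nb| ≤ M) (hzb : |zb| ≤ M)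
    (hne : ε ≤ n) (hnbe : ε ≤ nb) (hy : |y| ≤ Y) (ha : |a| ≤ 1) (hb : |b| ≤ 1) :
    |a * ((1 - (1/2)*(z - y)^2 - n + pn) * n - (1 - (1/2)*(zb - y)^2 - nb) * nb)
      + b * ((1 - (1/2)*(z - y)^2 - n) * (n*z) + pn * (n*z) - A*(n*z - n*y) + n*pz
          - (1 - (1/2)*(zb - y)^2 - nb) * (nb*zb) + A*(nb*zb - nb*y))|
    ≤ KwC A M ε Y * (|n - nb| + |n*z - nb*zb|) + K3C M * (|pn| + |pz|) := by
  have hM : 0 < M := lt_of_lt_of_le hε hMε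
  have hnpos : 0 < n := lt_of_lt_of_le hε hne
  have hnbpos : 0 < nb := lt_of_lt_of_le hε hnbe
  obtain ⟨u, hu⟩ : ∃ u : ℝ, u = n - nb := ⟨_, rfl⟩
  obtain ⟨v, hv⟩ : ∃ v : ℝ, v = n*z - nb*zb := ⟨_, rfl⟩
  obtain ⟨c, hc⟩ : ∃ c : ℝ, c = 1 - (1/2)*(z - y)^2 - n := ⟨_, rfl⟩
  obtain ⟨cb, hcb⟩ : ∃ cb : ℝ, cb = 1 - (1/2)*(zb - y)^2 - nb := ⟨_, rfl⟩
  obtain ⟨w, hw⟩ : ∃ w : ℝ, w = |u| + |v| := ⟨_, rfl⟩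
  rw [show |n - nb| + |n*z - nb*zb| = w from by rw [hw, hu, hv]]
  have hwnn : 0 ≤ w := by rw [hw]; positivity
  have hK1nn : 0 ≤ K1C M ε := by rw [K1C]; positivity
  have hB1nn : 0 ≤ B1C M Y := by rw [B1C]; positivity
  have hB2nn : 0 ≤ B2C M ε Y := by
    rw [B2C]
    have : 0 ≤ (M+Y) * K1C M ε := mul_nonneg (by positivity) hK1nn
    linarith
  have huw : |u| ≤ w := by rw [hw]; linarith [abs_nonneg v]
  have hvw : |v| ≤ w := by rw [hw]; linarith [abs_nonneg u]
  have hzzb : |z - zb| ≤ K1C M ε * w := by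
    have heq : z - zb = (v - zb*u)/n := by
      rw [hv, hu]; field_simp; ring
    rw [heq, abs_div]
    have h1 : |v - zb*u| ≤ |v| + M * |u| := by
      have t1 : |v - zb*u| ≤ |v| + |zb*u| := abs_sub _ _
      have t2 : |zb*u| ≤ M * |u| := by
        rw [abs_mul]; exact mul_le_mul_of_nonneg_right hzb (abs_nonneg _)
      linarith
    have h2 : ε ≤ |n| := le_trans hne (le_abs_self n)
    have h3 : (0:ℝ) ≤ |v| + M * |u| := by
      have := mul_nonneg hM.le (abs_nonneg u); linarith [abs_nonneg v]
    calc |v - zb*u| / |n| ≤ (|v| + M*|u|) / ε := div_le_div₀ h3 h1 hε h2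
      _ ≤ ((M+1) * w) / ε := by
          gcongr
          rw [hw]; nlinarith [abs_nonneg u, abs_nonneg v]
      _ = K1C M ε * w := by rw [K1C]; ring
  have hzbY : |zb - y| ≤ M + Y := le_trans (abs_sub _ _) (add_le_add hzb hy)
  have hzbY2 : (zb - y)^2 ≤ (M + Y)^2 := by
    rw [← sq_abs]
    exact pow_le_pow_left₀ (abs_nonneg _) hzbY 2
  have hcbB : |cb| ≤ B1C M Y := by
    rw [hcb, B1C, abs_le]
    have h1 := abs_le.mp hnb
    constructor
    · linarith [hzbY2, h1.1, h1.2, sq_nonneg (zb - y), sq_nonneg (M + Y)]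
    · linarith [hzbY2, h1.1, h1.2, sq_nonneg (zb - y), sq_nonneg (M + Y)]
  have hsum3 : |z + zb - 2*y| ≤ 2*M + 2*Y := by
    have t1 : |z + zb - 2*y| ≤ |z + zb| + |2*y| := abs_sub _ _
    have t2 : |z + zb| ≤ M + M := le_trans (abs_add_le _ _) (add_le_add hz hzb)
    have t3 : |2*y| = 2*|y| := by rw [abs_mul]; norm_num
    linarith
  have hccb : |c - cb| ≤ B2C M ε Y * w := by
    have heq : c - cb = -(1/2)*(z - zb)*(z + zb - 2*y) - u := by
      rw [hc, hcb, hu]; ring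
    have t1 : |c - cb| ≤ (1/2)*(|z - zb| * |z + zb - 2*y|) + |u| := by
      rw [heq]
      calc |(-(1/2))*(z-zb)*(z+zb-2*y) - u| ≤ |(-(1/2))*(z-zb)*(z+zb-2*y)| + |u| := abs_sub _ _
        _ = (1/2)*(|z-zb| * |z+zb-2*y|) + |u| := by
            rw [abs_mul, abs_mul]
            rw [show |(-(1/2):ℝ)| = (1/2:ℝ) by norm_num]
            ring
    have t2 : |z - zb| * |z + zb - 2*y| ≤ (K1C M ε * w) * (2*M + 2*Y) :=
      mul_le_mul hzzb hsum3 (abs_nonneg _) (mul_nonneg hK1nn hwnn)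
    have t3 : (1/2)*((K1C M ε * w) * (2*M + 2*Y)) + |u| ≤ B2C M ε Y * w := by
      have e2 : B2C M ε Y * w = (1/2)*((K1C M ε * w) * (2*M + 2*Y)) + w := by rw [B2C]; ring
      rw [e2]; linarith
    linarith
  have hmain : a * ((1 - (1/2)*(z - y)^2 - n + pn) * n - (1 - (1/2)*(zb - y)^2 - nb) * nb)
      + b * ((1 - (1/2)*(z - y)^2 - n) * (n*z) + pn * (n*z) - A*(n*z - n*y) + n*pz
          - (1 - (1/2)*(zb - y)^2 - nb) * (nb*zb) + A*(nb*zb - nb*y))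
      = a * (cb*u + (c - cb)*n + pn*n)
        + b * (cb*v + (c - cb)*(n*z) + pn*(n*z) - A*v + A*y*u + n*pz) := by
    rw [hc, hcb, hu, hv]; ring
  rw [hmain]
  have hnz : |n*z| ≤ M * M := by
    rw [abs_mul]
    exact mul_le_mul hn hz (abs_nonneg _) (le_of_lt hM)
  have hB2w : 0 ≤ B2C M ε Y * w := mul_nonneg hB2nn hwnn
  have hRu : |cb*u + (c - cb)*n + pn*n| ≤ B1C M Y * |u| + (B2C M ε Y * w) * M + M * |pn| := by
    have t1 : |cb*u + (c - cb)*n + pn*n| ≤ |cb| * |u| + |c - cb| * |n| + |pn| * |n| := by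
      calc |cb*u + (c - cb)*n + pn*n| ≤ |cb*u + (c-cb)*n| + |pn*n| := abs_add_le _ _
        _ ≤ |cb*u| + |(c-cb)*n| + |pn*n| := by linarith [abs_add_le (cb*u) ((c-cb)*n)]
        _ = |cb| * |u| + |c - cb| * |n| + |pn| * |n| := by rw [abs_mul, abs_mul, abs_mul]
    have b1 : |cb| * |u| ≤ B1C M Y * |u| := mul_le_mul_of_nonneg_right hcbB (abs_nonneg _)
    have b2 : |c - cb| * |n| ≤ (B2C M ε Y * w) * M := mul_le_mul hccb hn (abs_nonneg _) hB2w
    have b3 : |pn| * |n| ≤ |pn| * M := mul_le_mul_of_nonneg_left hn (abs_nonneg _)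
    linarith
  have hRv : |cb*v + (c - cb)*(n*z) + pn*(n*z) - A*v + A*y*u + n*pz|
      ≤ B1C M Y * |v| + (B2C M ε Y * w) * (M*M) + (M*M) * |pn| + A*|v| + (A*Y)*|u| + M*|pz| := by
    have t1 : |cb*v + (c - cb)*(n*z) + pn*(n*z) - A*v + A*y*u + n*pz|
        ≤ |cb| * |v| + |c - cb| * |n*z| + |pn| * |n*z| + A * |v| + (A*|y|) * |u| + |n| * |pz| := by
      have s1 : |cb*v + (c - cb)*(n*z) + pn*(n*z) - A*v + A*y*u + n*pz|
          ≤ |cb*v| + |(c-cb)*(n*z)| + |pn*(n*z)| + |A*v| + |A*y*u| + |n*pz| := by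
        have a1 := abs_add_le (cb*v + (c - cb)*(n*z) + pn*(n*z) - A*v + A*y*u) (n*pz)
        have a2 := abs_add_le (cb*v + (c - cb)*(n*z) + pn*(n*z) - A*v) (A*y*u)
        have a3 := abs_sub (cb*v + (c - cb)*(n*z) + pn*(n*z)) (A*v)
        have a4 := abs_add_le (cb*v + (c - cb)*(n*z)) (pn*(n*z))
        have a5 := abs_add_le (cb*v) ((c-cb)*(n*z))
        linarith
      have e1 : |cb*v| = |cb| * |v| := abs_mul _ _
      have e2 : |(c-cb)*(n*z)| = |c-cb| * |n*z| := abs_mul _ _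
      have e3 : |pn*(n*z)| = |pn| * |n*z| := abs_mul _ _
      have e4 : |A*v| = A * |v| := by rw [abs_mul, abs_of_pos hA]
      have e5 : |A*y*u| = (A*|y|) * |u| := by rw [abs_mul, abs_mul, abs_of_pos hA]
      have e6 : |n*pz| = |n| * |pz| := abs_mul _ _
      rw [e1, e2, e3, e4, e5, e6] at s1
      exact s1
    have b1 : |cb| * |v| ≤ B1C M Y * |v| := mul_le_mul_of_nonneg_right hcbB (abs_nonneg _)
    have b2 : |c - cb| * |n*z| ≤ (B2C M ε Y * w) * (M*M) :=
      mul_le_mul hccb hnz (abs_nonneg _) hB2w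
    have b3 : |pn| * |n*z| ≤ |pn| * (M*M) := mul_le_mul_of_nonneg_left hnz (abs_nonneg _)
    have b4 : (A*|y|) * |u| ≤ (A*Y) * |u| :=
      mul_le_mul_of_nonneg_right (mul_le_mul_of_nonneg_left hy hA.le) (abs_nonneg _)
    have b5 : |n| * |pz| ≤ M * |pz| := mul_le_mul_of_nonneg_right hn (abs_nonneg _)
    linarith
  have habs : |a * (cb*u + (c - cb)*n + pn*n)
        + b * (cb*v + (c - cb)*(n*z) + pn*(n*z) - A*v + A*y*u + n*pz)|
      ≤ |cb*u + (c - cb)*n + pn*n|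
        + |cb*v + (c - cb)*(n*z) + pn*(n*z) - A*v + A*y*u + n*pz| := by
    have a1 := abs_add_le (a * (cb*u + (c - cb)*n + pn*n))
      (b * (cb*v + (c - cb)*(n*z) + pn*(n*z) - A*v + A*y*u + n*pz))
    have a2 : |a * (cb*u + (c - cb)*n + pn*n)| ≤ |cb*u + (c - cb)*n + pn*n| := by
      rw [abs_mul]
      nlinarith [abs_nonneg (cb*u + (c - cb)*n + pn*n), ha, abs_nonneg a]
    have a3 : |b * (cb*v + (c - cb)*(n*z) + pn*(n*z) - A*v + A*y*u + n*pz)|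
        ≤ |cb*v + (c - cb)*(n*z) + pn*(n*z) - A*v + A*y*u + n*pz| := by
      rw [abs_mul]
      nlinarith [abs_nonneg (cb*v + (c - cb)*(n*z) + pn*(n*z) - A*v + A*y*u + n*pz), hb, abs_nonneg b]
    linarith
  have eK : KwC A M ε Y * w
      = 2*(B1C M Y)*w + ((M + M^2) * B2C M ε Y)*w + A*w + (A*Y)*w := by rw [KwC]; ring
  have e1 : B1C M Y * |u| + B1C M Y * |v| = B1C M Y * w := by rw [hw]; ring
  have e2 : (B2C M ε Y * w) * M + (B2C M ε Y * w) * (M*M) = ((M + M^2) * B2C M ε Y)*w := by ring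
  have e3a : A*|v| ≤ A*w := mul_le_mul_of_nonneg_left hvw hA.le
  have e3b : (A*Y)*|u| ≤ (A*Y)*w := mul_le_mul_of_nonneg_left huw (by positivity)
  have e4 : M * |pn| + (M*M)*|pn| + M*|pz| ≤ K3C M * (|pn| + |pz|) := by
    have e : K3C M * (|pn| + |pz|) = M * |pn| + (M*M)*|pn| + M*|pz| + (M*M)*|pz| := by
      rw [K3C]; ring
    rw [e]
    have : 0 ≤ (M*M)*|pz| := mul_nonneg (by positivity) (abs_nonneg _)
    linarith
  have hB1w : 0 ≤ B1C M Y * w := mul_nonneg hB1nn hwnn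
  linarith [habs, hRu, hRv, eK, e1, e2, e3a, e3b, e4, hB1w]

def gComp (lam kap gth C1 t : ℝ) : ℝ :=
  (lam/gth) * Real.exp (C1*t) + (kap/gth) * (Real.exp (C1*t) - Real.exp (-gth*t))
def gComp' (lam kap gth C1 t : ℝ) : ℝ :=
  (lam/gth) * (Real.exp (C1*t) * C1)
    + (kap/gth) * (Real.exp (C1*t) * C1 - Real.exp (-gth*t) * (-gth))

lemma gComp_hasDerivAt (lam kap gth C1 t : ℝ) :
    HasDerivAt (gComp lam kap gth C1) (gComp' lam kap gth C1 t) t := by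
  have h1 : HasDerivAt (fun s : ℝ => C1 * s) C1 t := by
    simpa using (hasDerivAt_id t).const_mul C1
  have hE : HasDerivAt (fun s : ℝ => Real.exp (C1*s)) (Real.exp (C1*t) * C1) t := h1.exp
  have h2 : HasDerivAt (fun s : ℝ => -gth * s) (-gth) t := by
    simpa using (hasDerivAt_id t).const_mul (-gth)
  have hF : HasDerivAt (fun s : ℝ => Real.exp (-gth*s)) (Real.exp (-gth*t) * (-gth)) t := h2.exp
  exact (hE.const_mul (lam/gth)).add ((hE.sub hF).const_mul (kap/gth))

lemma gComp_zero_pos {lam kap gth C1 : ℝ} (hlam : 0 < lam) (hgth : 0 < gth) :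
    0 < gComp lam kap gth C1 0 := by
  have h : gComp lam kap gth C1 0 = lam/gth := by unfold gComp; simp
  rw [h]; exact div_pos hlam hgth

lemma gComp_le {lam kap gth C1 t : ℝ} (hlam : 0 ≤ lam) (hkap : 0 ≤ kap) (hgth : 0 < gth) :
    gComp lam kap gth C1 t ≤ ((lam + kap)/gth) * Real.exp (C1*t) := by
  unfold gComp
  have h1 : Real.exp (C1*t) - Real.exp (-gth*t) ≤ Real.exp (C1*t) :=
    sub_le_self _ (Real.exp_nonneg _)
  have h2 : (kap/gth) * (Real.exp (C1*t) - Real.exp (-gth*t)) ≤ (kap/gth) * Real.exp (C1*t) :=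
    mul_le_mul_of_nonneg_left h1 (by positivity)
  have e : ((lam + kap)/gth) * Real.exp (C1*t)
      = (lam/gth) * Real.exp (C1*t) + (kap/gth) * Real.exp (C1*t) := by ring
  rw [e]; linarith

lemma gComp_ineq {Kw K3 C₀ gth t : ℝ} (hKw : 0 ≤ Kw) (hK3 : 0 ≤ K3) (hC₀ : 0 < C₀)
    (hgth : 0 < gth) (ht : 0 ≤ t) :
    Kw * gComp (K3*C₀+1) (Real.exp 1*(K3*C₀+1)) gth (Kw+1) t
      + K3 * (C₀/gth + (Icc (0:ℝ) (1/gth)).indicator (fun _ => C₀) t)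
    < gComp' (K3*C₀+1) (Real.exp 1*(K3*C₀+1)) gth (Kw+1) t := by
  set lam := K3*C₀+1 with hlam
  set kap := Real.exp 1 * lam with hkap
  have hlamp : 0 < lam := by positivity
  have hkapp : 0 < kap := by positivity
  set E := Real.exp ((Kw+1)*t) with hE
  set F := Real.exp (-gth*t) with hF
  have hE1 : 1 ≤ E := by
    rw [hE]; apply Real.one_le_exp; positivity
  have hF0 : 0 < F := Real.exp_pos _
  have hF1 : F ≤ 1 := by
    rw [hF]; apply Real.exp_le_one_iff.mpr; simp; positivity
  have hdiff : gComp' lam kap gth (Kw+1) t - Kw * gComp lam kap gth (Kw+1) t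
      = (lam/gth) * E + (kap/gth) * E + (kap/gth) * (Kw * F) + kap * F := by
    unfold gComp gComp'
    rw [← hE, ← hF]
    field_simp
    ring
  have hlamE : lam/gth ≤ (lam/gth) * E := by
    nth_rewrite 1 [← mul_one (lam/gth)]
    exact mul_le_mul_of_nonneg_left hE1 (by positivity)
  have hnn1 : 0 ≤ (kap/gth) * E := by positivity
  have hnn2 : 0 ≤ (kap/gth) * (Kw * F) := by
    apply mul_nonneg (by positivity) (mul_nonneg hKw hF0.le)
  have hA1 : lam/gth + lam = K3*(C₀/gth + C₀) + (1/gth + 1) := by rw [hlam]; ring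
  have hA2 : lam/gth = K3*(C₀/gth) + 1/gth := by rw [hlam]; ring
  clear_value lam kap E F
  by_cases hmem : t ∈ Icc (0:ℝ) (1/gth)
  · rw [Set.indicator_of_mem hmem]
    have htle : t ≤ 1/gth := hmem.2
    have hgt : gth * t ≤ 1 := by
      rw [le_div_iff₀ hgth] at htle; linarith
    have hFe : Real.exp (-1) ≤ F := by
      rw [hF]; apply Real.exp_le_exp.mpr; linarith
    have hkapF : lam ≤ kap * F := by
      have h1 : kap * Real.exp (-1) ≤ kap * F := mul_le_mul_of_nonneg_left hFe hkapp.le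
      have h2 : kap * Real.exp (-1) = lam := by
        rw [hkap, Real.exp_neg]
        field_simp
      linarith
    have h1gth : 0 < 1/gth := by positivity
    linarith [hdiff, hlamE, hnn1, hnn2, hkapF, hA1]
  · rw [Set.indicator_of_notMem hmem]
    have hkapF : 0 ≤ kap * F := by positivity
    have h1gth : 0 < 1/gth := by positivity
    rw [show K3 * (C₀/gth + 0) = K3*(C₀/gth) from by ring]
    linarith [hdiff, hlamE, hnn1, hnn2, hkapF, hA2]

end
end KBMAux

/-- Stability of the KBM under the perturbations of Theorem 2.1 (Section 5.4 of the paper):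
if `(N,Z)` solves the KBM system perturbed by `(φ_N, φ_Z)` with
`‖φ_N(t,·)‖_∞ + ‖φ_Z(t,·)‖_∞ ≤ C₀/γ^θ + C₀ 1_{[0,1/γ^θ]}(t)` and `(N̄,Z̄)` solves the KBM,
with common initial data `(N⁰,Z⁰) ∈ W^{2,∞}`, `min N⁰ > 0`, all solutions bounded by `M` and
bounded below by `ε > 0`, then there is `C > 0` independent of `γ` with
`‖(N-N̄)(t,·)‖_∞ + ‖(NZ-N̄Z̄)(t,·)‖_∞ ≤ (C/γ^θ) e^{Ct}`; in particular `(N,Z) → (N̄,Z̄)`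
as `γ → ∞`. -/
theorem kbm_stability (d : ℕ) (hd : 1 ≤ d) (A : ℝ) (hA : 0 < A)
    (θ : ℝ) (hθ : θ ∈ Set.Ioo (0:ℝ) 1) (τ : ℝ) (hτ : 0 < τ)
    (yopt : ℝ → Eucl d → ℝ)
    (hyopt : ∃ M : ℝ, ∀ (t : ℝ) (x : Eucl d), 0 ≤ t →
      |yopt t x| + ‖fderiv ℝ (fun p : ℝ × Eucl d => yopt p.1 p.2) (t, x)‖ ≤ M)
    (hyper : ∀ t : ℝ, PeriodicFn (yopt t))
    (Nb Zb : ℝ → Eucl d → ℝ) (N0 Z0 : Eucl d → ℝ) (C₀ M ε : ℝ)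
    (hC₀ : 0 < C₀) (hε : 0 < ε)
    (hN0W2 : BddW2inf N0) (hZ0W2 : BddW2inf Z0) (hN0pos : ∀ x, ε ≤ N0 x)
    (hHb : HolderOn θ τ Nb ∧ HolderOn θ τ Zb)
    (hperb : ∀ t : ℝ, PeriodicFn (Nb t) ∧ PeriodicFn (Zb t))
    (hsmb : ∀ t : ℝ, 0 ≤ t → t < τ → ContDiff ℝ 2 (Nb t) ∧ ContDiff ℝ 2 (Zb t))
    (heqb : KBMsystem A yopt (fun _ _ => 0) (fun _ _ => 0) Nb Zb τ)
    (hinitb : ∀ x, Nb 0 x = N0 x ∧ Zb 0 x = Z0 x)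
    (hbddb : ∀ (t : ℝ) (x : Eucl d), 0 ≤ t → t < τ → |Nb t x| + |Zb t x| ≤ M)
    (hlowb : ∀ (t : ℝ) (x : Eucl d), 0 ≤ t → t < τ → ε ≤ Nb t x) :
    ∃ C > (0:ℝ), ∀ γ > (0:ℝ), ∀ N Z φN φZ : ℝ → Eucl d → ℝ,
      (HolderOn θ τ N ∧ HolderOn θ τ Z) →
      (∀ t : ℝ, PeriodicFn (N t) ∧ PeriodicFn (Z t)) →
      (∀ t : ℝ, 0 ≤ t → t < τ → ContDiff ℝ 2 (N t) ∧ ContDiff ℝ 2 (Z t)) →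
      KBMsystem A yopt φN φZ N Z τ →
      (∀ x, N 0 x = N0 x ∧ Z 0 x = Z0 x) →
      (∀ (t : ℝ) (x : Eucl d), 0 ≤ t → t < τ → |N t x| + |Z t x| ≤ M) →
      (∀ (t : ℝ) (x : Eucl d), 0 ≤ t → t < τ → ε ≤ N t x) →
      (∀ (t : ℝ) (x : Eucl d), 0 ≤ t → t < τ →
        |φN t x| + |φZ t x|
          ≤ C₀ / γ ^ θ + (Set.Icc (0:ℝ) (1 / γ ^ θ)).indicator (fun _ => C₀) t) →
      ∀ (t : ℝ) (x : Eucl d), 0 ≤ t → t < τ →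
        |N t x - Nb t x| + |N t x * Z t x - Nb t x * Zb t x|
          ≤ (C / γ ^ θ) * Real.exp (C * t) := by
  classical
  obtain ⟨Y₀, hY₀⟩ := hyopt
  set Y : ℝ := max Y₀ 0 with hYdef
  have hYnn : 0 ≤ Y := le_max_right _ _
  have hyY : ∀ (t : ℝ) (x : Eucl d), 0 ≤ t → |yopt t x| ≤ Y := by
    intro t x ht
    have h1 := hY₀ t x ht
    have h2 := norm_nonneg (fderiv ℝ (fun p : ℝ × Eucl d => yopt p.1 p.2) (t, x))
    have : |yopt t x| ≤ Y₀ := by linarith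
    exact le_trans this (le_max_left _ _)
  have hεM : ε ≤ M := by
    have h1 := hlowb 0 (0 : Eucl d) le_rfl hτ
    have h2 := hbddb 0 (0 : Eucl d) le_rfl hτ
    have h3 := abs_nonneg (Zb 0 (0 : Eucl d))
    have h4 := le_abs_self (Nb 0 (0 : Eucl d))
    linarith
  have hM : 0 < M := lt_of_lt_of_le hε hεM
  have hKwnn : 0 ≤ KwC A M ε Y := KwC_nonneg hA hε hM.le hYnn
  have hK3nn : 0 ≤ K3C M := K3C_nonneg hM.le
  have hC1pos : 0 < KwC A M ε Y + 1 := by linarith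
  -- the final constant
  set lamF : ℝ := K3C M * C₀ + 1 with hlamF
  set kapF : ℝ := Real.exp 1 * lamF with hkapF
  have hlamFpos : 0 < lamF := by positivity
  have hkapFpos : 0 < kapF := by positivity
  set Cf : ℝ := max (KwC A M ε Y + 1) (lamF + kapF) with hCf
  have hCfpos : 0 < Cf := lt_of_lt_of_le hC1pos (le_max_left _ _)
  refine ⟨Cf, hCfpos, ?_⟩
  intro γ hγ N Z φN φZ hH hper hsm heq hinit hbdd hlow hφ
  have hγθ : 0 < γ ^ θ := Real.rpow_pos_of_pos hγ θ
  -- Hölder data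
  obtain ⟨⟨CN, hCN⟩, ⟨CZ, hCZ⟩⟩ := hH
  obtain ⟨⟨CbN, hCbN⟩, ⟨CbZ, hCbZ⟩⟩ := hHb
  -- componentwise sup bounds
  have hNle : ∀ (t : ℝ) (x : Eucl d), 0 ≤ t → t < τ → |N t x| ≤ M := by
    intro t x h1 h2; have := hbdd t x h1 h2; have := abs_nonneg (Z t x); linarith
  have hZle : ∀ (t : ℝ) (x : Eucl d), 0 ≤ t → t < τ → |Z t x| ≤ M := by
    intro t x h1 h2; have := hbdd t x h1 h2; have := abs_nonneg (N t x); linarith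
  have hNble : ∀ (t : ℝ) (x : Eucl d), 0 ≤ t → t < τ → |Nb t x| ≤ M := by
    intro t x h1 h2; have := hbddb t x h1 h2; have := abs_nonneg (Zb t x); linarith
  have hZble : ∀ (t : ℝ) (x : Eucl d), 0 ≤ t → t < τ → |Zb t x| ≤ M := by
    intro t x h1 h2; have := hbddb t x h1 h2; have := abs_nonneg (Nb t x); linarith
  -- apply the maximum principle
  have key : ∀ (t : ℝ) (x : Eucl d), 0 ≤ t → t < τ →
      |N t x - Nb t x| + |N t x * Z t x - Nb t x * Zb t x|
        < gComp lamF kapF (γ^θ) (KwC A M ε Y + 1) t := by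
    refine kbm_max_principle hd hθ.1 hτ
      (fun t x => N t x - Nb t x)
      (fun t x => N t x * Z t x - Nb t x * Zb t x)
      (fun t => K3C M * (C₀/γ^θ + (Icc (0:ℝ) (1/γ^θ)).indicator (fun _ => C₀) t))
      (gComp lamF kapF (γ^θ) (KwC A M ε Y + 1))
      (gComp' lamF kapF (γ^θ) (KwC A M ε Y + 1))
      (L := CN + CbN + M*(CZ + CN + CbZ + CbN)) (Kw := KwC A M ε Y)
      ?_ ?_ ?_ ?_ ?_ ?_ ?_ ?_
    · -- smoothness
      intro t h1 h2
      obtain ⟨hN2, hZ2⟩ := hsm t h1 h2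
      obtain ⟨hNb2, hZb2⟩ := hsmb t h1 h2
      exact ⟨hN2.sub hNb2, (hN2.mul hZ2).sub (hNb2.mul hZb2)⟩
    · -- periodicity
      intro t
      constructor
      · intro x k
        simp only
        rw [(hper t).1 x k, (hperb t).1 x k]
      · intro x k
        simp only
        rw [(hper t).1 x k, (hper t).2 x k, (hperb t).1 x k, (hperb t).2 x k]
    · -- Hölder in time
      intro s t x hs1 hs2 ht1 ht2
      have hE0 : (0:ℝ) ≤ |t - s| ^ θ := Real.rpow_nonneg (abs_nonneg _) θ
      have hNd : |N t x - N s x| ≤ CN * |t - s| ^ θ := by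
        have := hCN s t x x hs1 hs2 ht1 ht2
        simpa using this
      have hZd : |Z t x - Z s x| ≤ CZ * |t - s| ^ θ := by
        have := hCZ s t x x hs1 hs2 ht1 ht2
        simpa using this
      have hNbd : |Nb t x - Nb s x| ≤ CbN * |t - s| ^ θ := by
        have := hCbN s t x x hs1 hs2 ht1 ht2
        simpa using this
      have hZbd : |Zb t x - Zb s x| ≤ CbZ * |t - s| ^ θ := by
        have := hCbZ s t x x hs1 hs2 ht1 ht2
        simpa using this
      have hu1 : |(N t x - Nb t x) - (N s x - Nb s x)|
          ≤ CN * |t - s| ^ θ + CbN * |t - s| ^ θ := by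
        have a1 : |(N t x - Nb t x) - (N s x - Nb s x)|
            ≤ |N t x - N s x| + |Nb t x - Nb s x| := by
          have e : (N t x - Nb t x) - (N s x - Nb s x)
              = (N t x - N s x) - (Nb t x - Nb s x) := by ring
          rw [e]
          exact abs_sub _ _
        linarith
      have hv1 : |(N t x * Z t x - Nb t x * Zb t x) - (N s x * Z s x - Nb s x * Zb s x)|
          ≤ M * (CZ * |t - s| ^ θ) + M * (CN * |t - s| ^ θ)
            + M * (CbZ * |t - s| ^ θ) + M * (CbN * |t - s| ^ θ) := by
        have e : (N t x * Z t x - Nb t x * Zb t x) - (N s x * Z s x - Nb s x * Zb s x)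
            = N t x * (Z t x - Z s x) + Z s x * (N t x - N s x)
              - (Nb t x * (Zb t x - Zb s x) + Zb s x * (Nb t x - Nb s x)) := by ring
        rw [e]
        have a1 := abs_sub (N t x * (Z t x - Z s x) + Z s x * (N t x - N s x))
          (Nb t x * (Zb t x - Zb s x) + Zb s x * (Nb t x - Nb s x))
        have a2 := abs_add_le (N t x * (Z t x - Z s x)) (Z s x * (N t x - N s x))
        have a3 := abs_add_le (Nb t x * (Zb t x - Zb s x)) (Zb s x * (Nb t x - Nb s x))
        have m1 : |N t x * (Z t x - Z s x)| ≤ M * (CZ * |t - s| ^ θ) := by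
          rw [abs_mul]
          exact mul_le_mul (hNle t x ht1 ht2) hZd (abs_nonneg _) hM.le
        have m2 : |Z s x * (N t x - N s x)| ≤ M * (CN * |t - s| ^ θ) := by
          rw [abs_mul]
          exact mul_le_mul (hZle s x hs1 hs2) hNd (abs_nonneg _) hM.le
        have m3 : |Nb t x * (Zb t x - Zb s x)| ≤ M * (CbZ * |t - s| ^ θ) := by
          rw [abs_mul]
          exact mul_le_mul (hNble t x ht1 ht2) hZbd (abs_nonneg _) hM.le
        have m4 : |Zb s x * (Nb t x - Nb s x)| ≤ M * (CbN * |t - s| ^ θ) := by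
          rw [abs_mul]
          exact mul_le_mul (hZble s x hs1 hs2) hNbd (abs_nonneg _) hM.le
        linarith
      have efin : (CN + CbN + M*(CZ + CN + CbZ + CbN)) * |t - s| ^ θ
          = CN * |t - s| ^ θ + CbN * |t - s| ^ θ
            + (M * (CZ * |t - s| ^ θ) + M * (CN * |t - s| ^ θ)
              + M * (CbZ * |t - s| ^ θ) + M * (CbN * |t - s| ^ θ)) := by ring
      rw [efin]
      linarith
    · -- initial condition
      intro x
      constructor
      · rw [(hinit x).1, (hinitb x).1, sub_self]
      · rw [(hinit x).1, (hinit x).2, (hinitb x).1, (hinitb x).2, sub_self]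
    · -- the PDE estimate
      intro t x a b h1 h2 ha hb
      obtain ⟨hNd, hZd⟩ := heq t x h1 h2
      obtain ⟨hNbd, hZbd⟩ := heqb t x h1 h2
      obtain ⟨hN2, hZ2⟩ := hsm t h1 h2
      obtain ⟨hNb2, hZb2⟩ := hsmb t h1 h2
      have hNε := hlow t x h1 h2
      have hNbε := hlowb t x h1 h2
      have hNne : N t x ≠ 0 := ne_of_gt (lt_of_lt_of_le hε hNε)
      have hNbne : Nb t x ≠ 0 := ne_of_gt (lt_of_lt_of_le hε hNbε)
      have hbig := (((hNd.sub hNbd).const_mul a).add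
        (((hNd.mul hZd).sub (hNbd.mul hZbd)).const_mul b))
      -- the lapl-free part of the derivative
      refine ⟨a * ((1 - (1/2)*(Z t x - yopt t x)^2 - N t x + φN t x) * N t x
            - (1 - (1/2)*(Zb t x - yopt t x)^2 - Nb t x) * Nb t x)
          + b * ((1 - (1/2)*(Z t x - yopt t x)^2 - N t x) * (N t x * Z t x)
            + φN t x * (N t x * Z t x) - A*(N t x * Z t x - N t x * yopt t x)
            + N t x * φZ t x
            - (1 - (1/2)*(Zb t x - yopt t x)^2 - Nb t x) * (Nb t x * Zb t x)
            + A*(Nb t x * Zb t x - Nb t x * yopt t x)), ?_, ?_⟩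
      · -- identify derivative
        have l1 : lapl (fun z => N t z - Nb t z) x = lapl (N t) x - lapl (Nb t) x :=
          kbm_lapl_sub hN2 hNb2 x
        have l2 : lapl (fun z => N t z * Z t z - Nb t z * Zb t z) x
            = (N t x * lapl (Z t) x + Z t x * lapl (N t) x + 2 * gradDot (N t) (Z t) x)
              - (Nb t x * lapl (Zb t) x + Zb t x * lapl (Nb t) x
                + 2 * gradDot (Nb t) (Zb t) x) := by
          rw [kbm_lapl_sub (hN2.mul hZ2) (hNb2.mul hZb2) x,
            kbm_lapl_mul hN2 hZ2 x, kbm_lapl_mul hNb2 hZb2 x]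
        have l3 : lapl (fun z => a * (N t z - Nb t z)
              + b * (N t z * Z t z - Nb t z * Zb t z)) x
            = a * lapl (fun z => N t z - Nb t z) x
              + b * lapl (fun z => N t z * Z t z - Nb t z * Zb t z) x :=
          kbm_lapl_comb (hN2.sub hNb2) ((hN2.mul hZ2).sub (hNb2.mul hZb2)) a b x
        have eval : lapl (fun z => a * (N t z - Nb t z)
              + b * (N t z * Z t z - Nb t z * Zb t z)) x
            + (a * ((1 - (1/2)*(Z t x - yopt t x)^2 - N t x + φN t x) * N t x
              - (1 - (1/2)*(Zb t x - yopt t x)^2 - Nb t x) * Nb t x)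
            + b * ((1 - (1/2)*(Z t x - yopt t x)^2 - N t x) * (N t x * Z t x)
              + φN t x * (N t x * Z t x) - A*(N t x * Z t x - N t x * yopt t x)
              + N t x * φZ t x
              - (1 - (1/2)*(Zb t x - yopt t x)^2 - Nb t x) * (Nb t x * Zb t x)
              + A*(Nb t x * Zb t x - Nb t x * yopt t x)))
            = a * ((lapl (N t) x + (1 - (1/2)*(Z t x - yopt t x)^2 - N t x + φN t x) * N t x)
                - (lapl (Nb t) x + (1 - (1/2)*(Zb t x - yopt t x)^2 - Nb t x + 0) * Nb t x))
              + b * (((lapl (N t) x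
                    + (1 - (1/2)*(Z t x - yopt t x)^2 - N t x + φN t x) * N t x) * Z t x
                  + N t x * (lapl (Z t) x + 2 * gradDot (N t) (Z t) x / N t x
                    - A * (Z t x - yopt t x) + φZ t x))
                - ((lapl (Nb t) x
                    + (1 - (1/2)*(Zb t x - yopt t x)^2 - Nb t x + 0) * Nb t x) * Zb t x
                  + Nb t x * (lapl (Zb t) x + 2 * gradDot (Nb t) (Zb t) x / Nb t x
                    - A * (Zb t x - yopt t x) + 0))) := by
          rw [l3, l1, l2]
          field_simp
          ring
        rw [eval]
        exact hbig
      · -- the bound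
        have hk := key_est A M ε Y (N t x) (Z t x) (Nb t x) (Zb t x) (yopt t x)
          (φN t x) (φZ t x) a b hA hε hεM hYnn
          (hNle t x h1 h2) (hZle t x h1 h2) (hNble t x h1 h2) (hZble t x h1 h2)
          hNε hNbε (hyY t x h1) ha hb
        have hφt := hφ t x h1 h2
        have h2' : K3C M * (|φN t x| + |φZ t x|)
            ≤ K3C M * (C₀/γ^θ + (Icc (0:ℝ) (1/γ^θ)).indicator (fun _ => C₀) t) :=
          mul_le_mul_of_nonneg_left hφt hK3nn
        calc |a * ((1 - (1/2)*(Z t x - yopt t x)^2 - N t x + φN t x) * N t x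
            - (1 - (1/2)*(Zb t x - yopt t x)^2 - Nb t x) * Nb t x)
          + b * ((1 - (1/2)*(Z t x - yopt t x)^2 - N t x) * (N t x * Z t x)
            + φN t x * (N t x * Z t x) - A*(N t x * Z t x - N t x * yopt t x)
            + N t x * φZ t x
            - (1 - (1/2)*(Zb t x - yopt t x)^2 - Nb t x) * (Nb t x * Zb t x)
            + A*(Nb t x * Zb t x - Nb t x * yopt t x))|
            ≤ KwC A M ε Y * (|N t x - Nb t x| + |N t x * Z t x - Nb t x * Zb t x|)
              + K3C M * (|φN t x| + |φZ t x|) := hk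
          _ ≤ KwC A M ε Y * (|N t x - Nb t x| + |N t x * Z t x - Nb t x * Zb t x|)
              + K3C M * (C₀/γ^θ + (Icc (0:ℝ) (1/γ^θ)).indicator (fun _ => C₀) t) := by
              linarith
    · -- derivative of g
      intro t _
      exact gComp_hasDerivAt lamF kapF (γ^θ) (KwC A M ε Y + 1) t
    · -- g 0 > 0
      exact gComp_zero_pos hlamFpos hγθ
    · -- differential inequality for g
      intro t h1 h2
      have := gComp_ineq (Kw := KwC A M ε Y) (K3 := K3C M) (C₀ := C₀) (gth := γ^θ)
        hKwnn hK3nn hC₀ hγθ h1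
      rw [hlamF]
      rw [hkapF, hlamF]
      exact this
  -- conclude
  intro t x h1 h2
  have hkey := key t x h1 h2
  have hle1 : gComp lamF kapF (γ^θ) (KwC A M ε Y + 1) t
      ≤ ((lamF + kapF)/γ^θ) * Real.exp ((KwC A M ε Y + 1) * t) :=
    gComp_le hlamFpos.le hkapFpos.le hγθ
  have hle2 : ((lamF + kapF)/γ^θ) * Real.exp ((KwC A M ε Y + 1) * t)
      ≤ (Cf/γ^θ) * Real.exp (Cf * t) := by
    have e1 : Real.exp ((KwC A M ε Y + 1) * t) ≤ Real.exp (Cf * t) := by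
      apply Real.exp_le_exp.mpr
      exact mul_le_mul_of_nonneg_right (le_max_left _ _) h1
    have e2 : (lamF + kapF)/γ^θ ≤ Cf/γ^θ :=
      (div_le_div_iff_of_pos_right hγθ).mpr (le_max_right _ _)
    have e3 : 0 ≤ Cf/γ^θ := div_nonneg hCfpos.le hγθ.le
    exact mul_le_mul e2 e1 (Real.exp_nonneg _) e3
  linarith
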